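/- Suppose π₀, π₁ > 0 with π₀ + π₁ = 1, and α₀₀, α₀₁, α₁₀, α₁₁ ≥ 0 with α₀₁ = α₁₀, and suppose there is d > 0 such that π₀α₀₀ + π₁α₀₁ = d and π₀α₁₀ + π₁α₁₁ = d. Define p_ab = π_b α_ab / d for a, b ∈ {0,1}, and λ = p₀₀ + p₁₁ − 1. Then for every integer k ≥ 1, the sum over all cyclic label sequences σ : ℤ/kℤ → {0,1} of the product ∏_{i=0}^{k−1} π_{σ(i+1)} α_{σ(i) σ(i+1)} equals d^k (1 + λ^k). -/

import Mathlib

lemma chainLem (M : Matrix (Fin 2) (Fin 2) ℝ) :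
    ∀ (n : ℕ) (a b : Fin 2),
      (M ^ n) a b = ∑ σ : Fin n → Fin 2,
        (∏ i : Fin n, M (Matrix.vecCons a σ i.castSucc) (σ i)) *
          (if Matrix.vecCons a σ (Fin.last n) = b then (1:ℝ) else 0) := by
  intro n
  induction n with
  | zero =>
    intro a b
    simp [Matrix.one_apply, Fin.last, eq_comm]
  | succ n ih =>
    intro a b
    rw [pow_succ', Matrix.mul_apply]
    have e : ∀ f : (Fin (n+1) → Fin 2) → ℝ,
        ∑ σ : Fin (n+1) → Fin 2, f σ
          = ∑ c : Fin 2, ∑ τ : Fin n → Fin 2, f (Matrix.vecCons c τ) := by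
      intro f
      rw [← Equiv.sum_comp (Fin.consEquiv fun _ => Fin 2) f, Fintype.sum_prod_type]
      rfl
    rw [e]
    refine Finset.sum_congr rfl fun c _ => ?_
    rw [ih c b, Finset.mul_sum]
    refine Finset.sum_congr rfl fun τ _ => ?_
    rw [Fin.prod_univ_succ]
    simp [← Fin.succ_last, ← Fin.succ_castSucc, mul_ite, mul_zero, mul_assoc]

lemma finLastAddOne (n : ℕ) : Fin.last n + 1 = 0 := by
  apply Fin.ext
  simp [Fin.val_add_one]

lemma finCastSuccAddOne {n : ℕ} (j : Fin n) : j.castSucc + 1 = j.succ := by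
  apply Fin.ext
  rw [Fin.val_add_one]
  simp [Fin.ne_of_lt (Fin.castSucc_lt_last j)]

lemma cyclicLem (M : Matrix (Fin 2) (Fin 2) ℝ) (n : ℕ) :
    ∑ σ : Fin (n+1) → Fin 2, ∏ i : Fin (n+1), M (σ i) (σ (i+1))
      = (M ^ (n+1)).trace := by
  have e : ∀ f : (Fin (n+1) → Fin 2) → ℝ,
      ∑ σ : Fin (n+1) → Fin 2, f σ
        = ∑ c : Fin 2, ∑ τ : Fin n → Fin 2, f (Matrix.vecCons c τ) := by
    intro f
    rw [← Equiv.sum_comp (Fin.consEquiv fun _ => Fin 2) f, Fintype.sum_prod_type]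
    rfl
  rw [e, Matrix.trace, pow_succ]
  unfold Matrix.diag
  refine Finset.sum_congr rfl fun a _ => ?_
  rw [Matrix.mul_apply]
  simp only [chainLem M n a, Finset.sum_mul]
  rw [Finset.sum_comm]
  refine Finset.sum_congr rfl fun τ _ => ?_
  rw [Fin.prod_univ_castSucc]
  have collapse : ∑ c : Fin 2,
      ((∏ i : Fin n, M (Matrix.vecCons a τ i.castSucc) (τ i)) *
        (if Matrix.vecCons a τ (Fin.last n) = c then (1:ℝ) else 0)) * M c a
      = (∏ i : Fin n, M (Matrix.vecCons a τ i.castSucc) (τ i)) *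
          M (Matrix.vecCons a τ (Fin.last n)) a := by
    rw [Finset.sum_eq_single (Matrix.vecCons a τ (Fin.last n))]
    · simp
    · intro c _ hc
      simp [Ne.symm hc]
    · simp
  rw [collapse]
  congr 1
  · refine Finset.prod_congr rfl fun j _ => ?_
    rw [finCastSuccAddOne]
    simp
  · rw [finLastAddOne]
    simp

lemma traceLem (M : Matrix (Fin 2) (Fin 2) ℝ) (lam : ℝ)
    (h0 : M 0 0 + M 0 1 = 1) (h1 : M 1 0 + M 1 1 = 1)
    (hlam : lam = M 0 0 + M 1 1 - 1) :
    ∀ n : ℕ, (M ^ n).trace = 1 + lam ^ n := by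
  have hb : M 0 1 = 1 - M 0 0 := by linarith
  have hc : M 1 0 = 1 - M 1 1 := by linarith
  have hMform : M = !![M 0 0, 1 - M 0 0; 1 - M 1 1, M 1 1] := by
    rw [← hb, ← hc]
    exact Matrix.etaExpand_eq M ▸ rfl
  obtain ⟨a, c, hac⟩ : ∃ a c, M = !![a, 1 - a; 1 - c, c] := ⟨M 0 0, M 1 1, hMform⟩
  clear hb hc hMform h0 h1
  subst hac
  have hlam2 : lam = a + c - 1 := by simpa using hlam
  set M : Matrix (Fin 2) (Fin 2) ℝ := !![a, 1 - a; 1 - c, c] with hMdef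
  have hCH : M ^ 2 = (1 + lam) • M - lam • 1 := by
    rw [hlam2, hMdef]
    ext i j
    fin_cases i <;> fin_cases j <;>
      simp [pow_two, Matrix.mul_apply, Fin.sum_univ_two, Matrix.one_apply] <;> ring
  have hrec : ∀ n : ℕ, (M ^ (n + 2)).trace
      = (1 + lam) * (M ^ (n + 1)).trace - lam * (M ^ n).trace := by
    intro n
    have : M ^ (n + 2) = (1 + lam) • M ^ (n + 1) - lam • M ^ n := by
      calc M ^ (n + 2) = M ^ n * M ^ 2 := pow_add M n 2
        _ = M ^ n * ((1 + lam) • M - lam • 1) := by rw [hCH]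
        _ = (1 + lam) • M ^ (n + 1) - lam • M ^ n := by
            rw [mul_sub, Matrix.mul_smul, Matrix.mul_smul, mul_one, pow_succ]
    rw [this, Matrix.trace_sub, Matrix.trace_smul, Matrix.trace_smul]
    simp
  have key : ∀ n : ℕ, (M ^ n).trace = 1 + lam ^ n
      ∧ (M ^ (n + 1)).trace = 1 + lam ^ (n + 1) := by
    intro n
    induction n with
    | zero =>
      constructor
      · simp [Matrix.trace_one]; norm_num
      · simp only [pow_one, zero_add]
        simp [Matrix.trace, Matrix.diag, Fin.sum_univ_two, hMdef, hlam2]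
    | succ m ihm =>
      refine ⟨ihm.2, ?_⟩
      rw [hrec m, ihm.1, ihm.2]
      ring
  exact fun n => (key n).1


/-- In a two-community SBM with common average degree `d`, the sum over all
cyclic label sequences `σ : ZMod k → {0,1}` of
`∏_{i} π_{σ(i+1)} α_{σ(i) σ(i+1)}` equals `d^k (1 + λ^k)`, where `λ` is the
second eigenvalue of the transition matrix `p_ab = π_b α_ab / d`. -/
theorem stmt2 (π : Fin 2 → ℝ) (α : Fin 2 → Fin 2 → ℝ) (d lam : ℝ)
    (p : Fin 2 → Fin 2 → ℝ)
    (hπ0 : 0 < π 0) (hπ1 : 0 < π 1) (hπsum : π 0 + π 1 = 1)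
    (hα : ∀ a b, 0 ≤ α a b) (hsym : α 0 1 = α 1 0) (hd : 0 < d)
    (hd0 : π 0 * α 0 0 + π 1 * α 0 1 = d)
    (hd1 : π 0 * α 1 0 + π 1 * α 1 1 = d)
    (hp : ∀ a b, p a b = π b * α a b / d)
    (hlam : lam = p 0 0 + p 1 1 - 1)
    (k : ℕ) [NeZero k] :
    ∑ σ : ZMod k → Fin 2, ∏ i : ZMod k, π (σ (i + 1)) * α (σ i) (σ (i + 1))
      = d ^ k * (1 + lam ^ k) := by
  obtain ⟨n, rfl⟩ : ∃ n, k = n + 1 := Nat.exists_eq_succ_of_ne_zero (NeZero.ne k)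
  have hd' : d ≠ 0 := ne_of_gt hd
  set P : Matrix (Fin 2) (Fin 2) ℝ := Matrix.of p with hP
  have hPab : ∀ a b, P a b = p a b := fun a b => rfl
  have hM : ∀ a b : Fin 2, π b * α a b = d * P a b := by
    intro a b
    rw [hPab, hp]
    field_simp
  have h0 : P 0 0 + P 0 1 = 1 := by
    rw [hPab, hPab, hp, hp, ← add_div, hd0, div_self hd']
  have h1 : P 1 0 + P 1 1 = 1 := by
    rw [hPab, hPab, hp, hp, ← add_div, hd1, div_self hd']
  have hstep : ∑ σ : Fin (n+1) → Fin 2,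
      ∏ i : Fin (n+1), π (σ (i + 1)) * α (σ i) (σ (i + 1))
      = d ^ (n+1) * (1 + lam ^ (n+1)) := by
    have : ∀ σ : Fin (n+1) → Fin 2,
        ∏ i : Fin (n+1), π (σ (i + 1)) * α (σ i) (σ (i + 1))
          = d ^ (n+1) * ∏ i : Fin (n+1), P (σ i) (σ (i + 1)) := by
      intro σ
      calc ∏ i : Fin (n+1), π (σ (i + 1)) * α (σ i) (σ (i + 1))
          = ∏ i : Fin (n+1), d * P (σ i) (σ (i + 1)) :=
            Finset.prod_congr rfl fun i _ => hM (σ i) (σ (i+1))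
        _ = d ^ (n+1) * ∏ i : Fin (n+1), P (σ i) (σ (i + 1)) := by
            rw [Finset.prod_mul_distrib, Finset.prod_const, Finset.card_univ,
              Fintype.card_fin]
    simp only [this]
    rw [← Finset.mul_sum, cyclicLem P n,
      traceLem P lam h0 h1 hlam (n+1)]
  exact hstep
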